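/- A binary structure with finitely many connectivity components is reversible if and only if all of its components are reversible. -/
import Mathlib


universe u v w

section Defs

variable {α : Type*} {β : Type*}

/-- `f` is a homomorphism from `⟨α, r⟩` to `⟨β, s⟩`. -/
def IsHom (r : α → α → Prop) (s : β → β → Prop) (f : α → β) : Prop :=
  ∀ x y, r x y → s (f x) (f y)

/-- A condensation is a bijective homomorphism. -/
def IsCond (r : α → α → Prop) (s : β → β → Prop) (f : α → β) : Prop :=
  Function.Bijective f ∧ IsHom r s f

/-- A monomorphism is an injective homomorphism. -/
def IsMono (r : α → α → Prop) (s : β → β → Prop) (f : α → β) : Prop :=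
  Function.Injective f ∧ IsHom r s f

/-- An isomorphism of binary structures. -/
def IsIso (r : α → α → Prop) (s : β → β → Prop) (f : α → β) : Prop :=
  Function.Bijective f ∧ ∀ x y, r x y ↔ s (f x) (f y)

/-- A binary structure is reversible iff every self-condensation is an automorphism. -/
def Reversible (r : α → α → Prop) : Prop :=
  ∀ f : α → α, IsCond r r f → IsIso r r f

/-- A binary structure is connected iff it has exactly one component: it is nonempty and
the least equivalence relation containing `r` relates any two points. -/
def Connected (r : α → α → Prop) : Prop :=
  Nonempty α ∧ ∀ x y, Relation.EqvGen r x y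

/-- The relation of the disjoint union of the structures `⟨X i, R i⟩`. -/
def unionRel {I : Type*} {X : I → Type*} (R : ∀ i, X i → X i → Prop) :
    (Σ i, X i) → (Σ i, X i) → Prop :=
  fun a b => ∃ h : a.1 = b.1, R b.1 (h ▸ a.2) b.2

end Defs

/-- **Theorem (Statement 3).** A binary structure `⟨α, ρ⟩` with finitely many connectivity
components (the equivalence classes of the least equivalence relation containing `ρ`) is
reversible iff every component — the class of a point `x`, with the restricted relation —
is reversible. -/
private lemma hom_eqvGen {α : Type u} {ρ : α → α → Prop} {f : α → α}
    (hf : IsHom ρ ρ f) : ∀ {x y}, Relation.EqvGen ρ x y → Relation.EqvGen ρ (f x) (f y) := by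
  intro x y h
  induction h with
  | rel a b h => exact Relation.EqvGen.rel _ _ (hf _ _ h)
  | refl a => exact Relation.EqvGen.refl _
  | symm a b _ ih => exact Relation.EqvGen.symm _ _ ih
  | trans a b c _ _ ih1 ih2 => exact Relation.EqvGen.trans _ _ _ ih1 ih2

private lemma hom_iterate {α : Type u} {ρ : α → α → Prop} {f : α → α}
    (hf : IsHom ρ ρ f) : ∀ (n : ℕ) (a b : α), ρ a b → ρ (f^[n] a) (f^[n] b) := by
  intro n
  induction n with
  | zero => intro a b h; exact h
  | succ m ih =>
      intro a b h
      simp only [Function.iterate_succ_apply]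
      exact ih _ _ (hf a b h)

theorem stmt3 {α : Type u} (ρ : α → α → Prop)
    (hfin : Finite (Quot (Relation.EqvGen ρ))) :
    Reversible ρ ↔
      ∀ x : α,
        Reversible (fun a b : {y : α // Relation.EqvGen ρ x y} => ρ a.1 b.1) := by
  classical
  have hE : Equivalence (Relation.EqvGen ρ) := Relation.EqvGen.is_equivalence ρ
  have mk_eq : ∀ {a b : α},
      Quot.mk (Relation.EqvGen ρ) a = Quot.mk (Relation.EqvGen ρ) b ↔ Relation.EqvGen ρ a b := by
    intro a b
    rw [Quot.eq]
    exact Equivalence.eqvGen_iff hE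
  constructor
  · -- reversible → components reversible
    intro hrev x g hg
    obtain ⟨⟨ginj, gsurj⟩, ghom⟩ := hg
    set f : α → α := fun a =>
      if h : Relation.EqvGen ρ x a then (g ⟨a, h⟩).1 else a with hfdef
    have hfC : ∀ (a : α) (h : Relation.EqvGen ρ x a), f a = (g ⟨a, h⟩).1 := by
      intro a h; simp only [hfdef, dif_pos h]
    have hfN : ∀ a : α, ¬ Relation.EqvGen ρ x a → f a = a := by
      intro a h; simp only [hfdef, dif_neg h]
    have fhom : IsHom ρ ρ f := by
      intro a b hab
      by_cases ha : Relation.EqvGen ρ x a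
      · have hb : Relation.EqvGen ρ x b := hE.trans ha (Relation.EqvGen.rel _ _ hab)
        rw [hfC a ha, hfC b hb]
        exact ghom ⟨a, ha⟩ ⟨b, hb⟩ hab
      · have hb : ¬ Relation.EqvGen ρ x b := fun hb =>
          ha (hE.trans hb (hE.symm (Relation.EqvGen.rel _ _ hab)))
        rw [hfN a ha, hfN b hb]
        exact hab
    have finj : Function.Injective f := by
      intro a b hab
      by_cases ha : Relation.EqvGen ρ x a <;> by_cases hb : Relation.EqvGen ρ x b
      · rw [hfC a ha, hfC b hb] at hab
        exact congrArg Subtype.val (ginj (Subtype.ext hab))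
      · exfalso
        rw [hfC a ha, hfN b hb] at hab
        exact hb (hab ▸ (g ⟨a, ha⟩).2)
      · exfalso
        rw [hfN a ha, hfC b hb] at hab
        exact ha (hab ▸ (g ⟨b, hb⟩).2)
      · rw [hfN a ha, hfN b hb] at hab
        exact hab
    have fsurj : Function.Surjective f := by
      intro b
      by_cases hb : Relation.EqvGen ρ x b
      · obtain ⟨c, hc⟩ := gsurj ⟨b, hb⟩
        refine ⟨c.1, ?_⟩
        rw [hfC c.1 c.2]
        exact congrArg Subtype.val hc
      · exact ⟨b, hfN b hb⟩
    obtain ⟨_, fiso⟩ := hrev f ⟨⟨finj, fsurj⟩, fhom⟩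
    refine ⟨⟨ginj, gsurj⟩, fun p q => ⟨ghom p q, ?_⟩⟩
    intro hpq
    have hp : f p.1 = (g p).1 := hfC p.1 p.2
    have hq : f q.1 = (g q).1 := hfC q.1 q.2
    exact (fiso p.1 q.1).mpr (by rw [hp, hq]; exact hpq)
  · -- components reversible → reversible
    intro hcomp f hf
    obtain ⟨⟨finj, fsurj⟩, fhom⟩ := hf
    have fE : ∀ {a b : α}, Relation.EqvGen ρ a b → Relation.EqvGen ρ (f a) (f b) :=
      hom_eqvGen fhom
    set F : Quot (Relation.EqvGen ρ) → Quot (Relation.EqvGen ρ) :=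
      Quot.map f (fun a b h => fE h) with hFdef
    have hFmk : ∀ a : α, F (Quot.mk _ a) = Quot.mk _ (f a) := fun a => rfl
    have Fsurj : Function.Surjective F := by
      intro q
      obtain ⟨a, rfl⟩ := Quot.exists_rep q
      obtain ⟨b, rfl⟩ := fsurj a
      exact ⟨Quot.mk _ b, rfl⟩
    haveI := hfin
    have Finj : Function.Injective F := (Finite.injective_iff_surjective (f := F)).mpr Fsurj
    have hFit : ∀ (k : ℕ) (a : α), F^[k] (Quot.mk (Relation.EqvGen ρ) a) = Quot.mk _ (f^[k] a) := by
      intro k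
      induction k with
      | zero => intro a; rfl
      | succ n ih =>
          intro a
          rw [Function.iterate_succ_apply, Function.iterate_succ_apply, hFmk]
          exact ih (f a)
    have hper : ∀ q : Quot (Relation.EqvGen ρ), ∃ k, 0 < k ∧ F^[k] q = q := by
      intro q
      have key : ∀ i j : ℕ, i < j → F^[j] q = F^[i] q → ∃ k, 0 < k ∧ F^[k] q = q := by
        intro i j hij heq
        refine ⟨j - i, Nat.sub_pos_of_lt hij, ?_⟩
        have : F^[i] (F^[j - i] q) = F^[i] q := by
          rw [← Function.iterate_add_apply]
          rw [show i + (j - i) = j from by omega]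
          exact heq
        exact Finj.iterate i this
      obtain ⟨i, j, hij, heq⟩ := Finite.exists_ne_map_eq_of_infinite (fun n : ℕ => F^[n] q)
      rcases hij.lt_or_gt with h | h
      · exact key i j h heq.symm
      · exact key j i h heq
    refine ⟨⟨finj, fsurj⟩, fun y z => ⟨fhom y z, ?_⟩⟩
    intro hfz
    have hEyz : Relation.EqvGen ρ y z := by
      apply mk_eq.mp
      apply Finj
      rw [hFmk, hFmk]
      exact mk_eq.mpr (Relation.EqvGen.rel _ _ hfz)
    obtain ⟨k, hk0, hkfix⟩ := hper (Quot.mk _ y)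
    have hmem : ∀ w : α, Relation.EqvGen ρ y w → Relation.EqvGen ρ y (f^[k] w) := by
      intro w hw
      have h1 : Quot.mk (Relation.EqvGen ρ) (f^[k] w) = Quot.mk _ y := by
        rw [← hFit k w, mk_eq.mpr (hE.symm hw), hkfix]
      exact hE.symm (mk_eq.mp h1)
    set h : {w : α // Relation.EqvGen ρ y w} → {w : α // Relation.EqvGen ρ y w} :=
      fun p => ⟨f^[k] p.1, hmem p.1 p.2⟩ with hhdef
    have hinj : Function.Injective h := by
      intro p q hpq
      exact Subtype.ext (finj.iterate k (congrArg Subtype.val hpq))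
    have hsurj : Function.Surjective h := by
      intro q
      obtain ⟨w, hw⟩ := (fsurj.iterate k) q.1
      have hyw : Relation.EqvGen ρ y w := by
        have h1 : F^[k] (Quot.mk (Relation.EqvGen ρ) w) = F^[k] (Quot.mk _ y) := by
          rw [hFit k w, hw, hkfix]
          exact (mk_eq.mpr (hE.symm q.2))
        exact hE.symm (mk_eq.mp (Finj.iterate k h1))
      exact ⟨⟨w, hyw⟩, Subtype.ext hw⟩
    obtain ⟨_, hiso⟩ := hcomp y h ⟨⟨hinj, hsurj⟩, fun p q hpq => hom_iterate fhom k p.1 q.1 hpq⟩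
    have := (hiso ⟨y, hE.refl y⟩ ⟨z, hEyz⟩).mpr
    apply this
    show ρ (f^[k] y) (f^[k] z)
    obtain ⟨m, rfl⟩ := Nat.exists_eq_succ_of_ne_zero hk0.ne'
    rw [Function.iterate_succ_apply, Function.iterate_succ_apply]
    exact hom_iterate fhom m (f y) (f z) hfz
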